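/- Let q ≥ 2 be an integer, let F_q denote the set of functions f : ℕ → ℤ such that qⁿ ∣ (Δⁿf)(x) for all n ≥ 0 and all x ≥ 0, let b ∈ F_q, and define the sequence of functions f₁ = b and f_{k+1}(x) = b(x) · ⟨f_k, f_k, …, f_k⟩(x) (q copies of f_k) for k ≥ 1 (so f_k is the average weight function of the complete q-ary tree of depth k, and each f_k ∈ F_q). Then for all k ≥ 1 and all m ≥ 0, ε_m^{f_k} ≡ ε_m^b · (ε_0^b)^{(q^k−1)/(q−1) − 1} (mod q). -/

import Mathlib

/-- The finite difference operator: `(Δ f)(x) = f(x+1) - f(x)`. -/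
def delta (f : ℕ → ℤ) : ℕ → ℤ := fun x => f (x + 1) - f x

/-- Membership in the set `F_q` of functions `f : ℕ → ℤ` with `q^n ∣ (Δ^n f)(x)`
for all `n` and `x`. -/
def memFq (q : ℕ) (f : ℕ → ℤ) : Prop :=
  ∀ (n : ℕ) (x : ℕ), (q : ℤ) ^ n ∣ (delta^[n] f) x

/-- For `f ∈ F_q`, `epsq q f n` is (a representative in `[0, q)` of) the element of
`ℤ/qℤ` with `(Δ^n f)(x) ≡ epsq q f n · q^n (mod q^(n+1))` for all `x`. -/
def epsq (q : ℕ) (f : ℕ → ℤ) (n : ℕ) : ℤ := ((delta^[n] f) 0 / (q : ℤ) ^ n) % (q : ℤ)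

set_option linter.unusedSectionVars false

namespace EpsAux

open Finset

lemma delta_iter_succ_right (f : ℕ → ℤ) (n x : ℕ) :
    delta^[n+1] f x = delta^[n] f (x+1) - delta^[n] f x := by
  rw [Function.iterate_succ_apply']; rfl

lemma delta_add (u v : ℕ → ℤ) :
    delta (fun y => u y + v y) = fun y => delta u y + delta v y := by
  funext y; simp [delta]; ring

lemma delta_iter_add (u v : ℕ → ℤ) (n : ℕ) :
    delta^[n] (fun y => u y + v y) = fun x => delta^[n] u x + delta^[n] v x := by
  induction n generalizing u v with
  | zero => rfl
  | succ n ih =>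
    rw [Function.iterate_succ_apply, Function.iterate_succ_apply,
      Function.iterate_succ_apply, delta_add, ih]

lemma delta_iter_shift (g : ℕ → ℤ) (n x : ℕ) :
    delta^[n] (fun y => g (y+1)) x = delta^[n] g (x+1) := by
  induction n generalizing g x with
  | zero => rfl
  | succ n ih =>
    rw [Function.iterate_succ_apply, Function.iterate_succ_apply]
    have h : delta (fun y => g (y+1)) = fun y => (delta g) (y+1) := rfl
    rw [h, ih]

lemma delta_mul (f g : ℕ → ℤ) :
    delta (fun y => f y * g y)
      = fun y => (fun z => delta f z * g (z+1)) y + (fun z => f z * delta g z) y := by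
  funext y; simp [delta]; ring

lemma delta_iter_mul (f g : ℕ → ℤ) (n : ℕ) (x : ℕ) :
    delta^[n] (fun y => f y * g y) x
      = ∑ i ∈ range (n+1), (n.choose i : ℤ) * delta^[i] f x * delta^[n-i] g (x+i) := by
  induction n generalizing f g with
  | zero => simp
  | succ n ih =>
    rw [Function.iterate_succ_apply, delta_mul, delta_iter_add]
    have ih1 := ih (delta f) (fun z => g (z+1))
    have ih2 := ih f (delta g)
    simp only [] at ih1 ih2 ⊢
    rw [ih1, ih2]
    have e1 : ∀ i ∈ range (n+1),
        (n.choose i : ℤ) * delta^[i] (delta f) x * delta^[n - i] (fun z => g (z+1)) (x+i)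
          = (n.choose i : ℤ) * delta^[i+1] f x * delta^[n-i] g (x+i+1) := by
      intro i _
      rw [delta_iter_shift, ← Function.iterate_succ_apply]
    have e2 : ∀ i ∈ range (n+1),
        (n.choose i : ℤ) * delta^[i] f x * delta^[n - i] (delta g) (x+i)
          = (n.choose i : ℤ) * delta^[i] f x * delta^[n+1-i] g (x+i) := by
      intro i hi
      rw [mem_range, Nat.lt_succ_iff] at hi
      rw [← Function.iterate_succ_apply, Nat.succ_sub hi]
    rw [Finset.sum_congr rfl e1, Finset.sum_congr rfl e2]
    -- now RHS side manipulation
    rw [Finset.sum_range_succ'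
      (fun i => ((n+1).choose i : ℤ) * delta^[i] f x * delta^[n+1-i] g (x+i)) (n+1)]
    simp only [Nat.succ_sub_succ_eq_sub, Nat.choose_succ_succ, Nat.choose_zero_right,
      Nat.cast_add, Nat.cast_one, Nat.cast_ofNat, Function.iterate_zero, id_eq]
    rw [show (∑ i ∈ range (n+1), ((n.choose i : ℤ) + (n.choose (i+1) : ℤ)) *
        delta^[i+1] f x * delta^[n-i] g (x+(i+1)))
      = (∑ i ∈ range (n+1), (n.choose i : ℤ) * delta^[i+1] f x * delta^[n-i] g (x+i+1))
        + (∑ i ∈ range (n+1), (n.choose (i+1) : ℤ) * delta^[i+1] f x * delta^[n-i] g (x+i+1))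
      from by rw [← Finset.sum_add_distrib]; apply Finset.sum_congr rfl; intro i _; ring]
    -- remains: second sum + boundary = ∑ C(n,i) Δ^i f Δ^{n+1-i} g (x+i)
    rw [Finset.sum_range_succ'
      (fun i => (n.choose i : ℤ) * delta^[i] f x * delta^[n+1-i] g (x+i)) n]
    rw [Finset.sum_range_succ
      (fun i => ((n.choose (i+1) : ℤ)) * delta^[i+1] f x * delta^[n-i] g (x+i+1)) n]
    simp only [Nat.choose_succ_self, Nat.cast_zero, zero_mul, add_zero,
      Nat.choose_zero_right, Nat.cast_one, one_mul, Function.iterate_zero, id_eq,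
      Nat.succ_sub_succ_eq_sub, Nat.add_zero]
    simp only [← Nat.add_assoc]
    ring

def eps (q : ℕ) (f : ℕ → ℤ) (n : ℕ) : ZMod q := ((delta^[n] f 0 / (q:ℤ)^n : ℤ) : ZMod q)

section
variable {q : ℕ} (hq : q ≠ 0)
include hq

lemma qpow_ne (n : ℕ) : ((q:ℤ))^n ≠ 0 := pow_ne_zero _ (Int.natCast_ne_zero.mpr hq)

lemma dvd_sub_iter {f : ℕ → ℤ} (hf : memFq q f) (n x : ℕ) :
    (q:ℤ)^(n+1) ∣ delta^[n] f x - delta^[n] f 0 := by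
  induction x with
  | zero => simp
  | succ x ih =>
    have h := hf (n+1) x
    rw [delta_iter_succ_right] at h
    have : delta^[n] f (x+1) - delta^[n] f 0
        = (delta^[n] f (x+1) - delta^[n] f x) + (delta^[n] f x - delta^[n] f 0) := by ring
    rw [this]
    exact dvd_add h ih

lemma eps_spec [NeZero q] {f : ℕ → ℤ} (hf : memFq q f) (n x : ℕ) :
    ((delta^[n] f x / (q:ℤ)^n : ℤ) : ZMod q) = eps q f n := by
  obtain ⟨a, ha⟩ := hf n x
  obtain ⟨c, hc⟩ := hf n 0
  have hqn := qpow_ne hq n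
  have hsub := dvd_sub_iter hq hf n x
  rw [ha, hc] at hsub
  rw [eps, ha, hc, Int.mul_ediv_cancel_left _ hqn, Int.mul_ediv_cancel_left _ hqn]
  have hdvd : (q:ℤ) ∣ a - c := by
    rcases hsub with ⟨d, hd⟩
    refine ⟨d, ?_⟩
    have : ((q:ℤ))^n * (a - c) = ((q:ℤ))^n * ((q:ℤ) * d) := by
      rw [mul_sub, pow_succ] at *
      linarith [hd]
    exact mul_left_cancel₀ hqn this
  have h0 : ((a - c : ℤ) : ZMod q) = 0 := (ZMod.intCast_zmod_eq_zero_iff_dvd _ q).mpr hdvd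
  push_cast at h0
  linear_combination h0

lemma memFq_shift {g : ℕ → ℤ} (hg : memFq q g) : memFq q (fun y => g (y+1)) := by
  intro n x; rw [delta_iter_shift]; exact hg n (x+1)

lemma memFq_mul {f g : ℕ → ℤ} (hf : memFq q f) (hg : memFq q g) :
    memFq q (fun y => f y * g y) := by
  intro n x
  rw [delta_iter_mul]
  apply Finset.dvd_sum
  intro i hi
  rw [mem_range, Nat.lt_succ_iff] at hi
  obtain ⟨a, ha⟩ := hf i x
  obtain ⟨c, hc⟩ := hg (n-i) (x+i)
  refine ⟨(n.choose i : ℤ) * a * c, ?_⟩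
  rw [ha, hc, show ((q:ℤ))^n = (q:ℤ)^i * (q:ℤ)^(n-i) from by
    rw [← pow_add, Nat.add_sub_cancel' hi]]
  ring

lemma memFq_one : memFq q (fun _ => (1:ℤ)) := by
  intro n x
  cases n with
  | zero => simp
  | succ n =>
    have h : ∀ m, delta^[m] (fun _ => (1:ℤ)) = if m = 0 then (fun _ => (1:ℤ)) else fun _ => 0 := by
      intro m
      induction m with
      | zero => simp
      | succ m ih =>
        rw [Function.iterate_succ_apply']
        rw [ih]
        by_cases hm : m = 0 <;> simp only [hm, if_true, if_false] <;>
          · funext y; simp [delta]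
    rw [h]
    simp

lemma memFq_pow {g : ℕ → ℤ} (hg : memFq q g) (j : ℕ) : memFq q (fun y => g y ^ j) := by
  induction j with
  | zero => simpa using memFq_one hq
  | succ j ih =>
    have h := memFq_mul hq hg ih
    have : (fun y => g y * g y ^ j) = fun y => g y ^ (j+1) := by
      funext y; rw [pow_succ']
    rwa [this] at h

lemma eps_mul [NeZero q] {f g : ℕ → ℤ} (hf : memFq q f) (hg : memFq q g) (n : ℕ) :
    eps q (fun y => f y * g y) n
      = ∑ i ∈ range (n+1), (n.choose i : ZMod q) * eps q f i * eps q g (n-i) := by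
  have key : delta^[n] (fun y => f y * g y) 0
      = (q:ℤ)^n * ∑ i ∈ range (n+1),
          (n.choose i : ℤ) * (delta^[i] f 0 / (q:ℤ)^i) * (delta^[n-i] g i / (q:ℤ)^(n-i)) := by
    rw [delta_iter_mul, Finset.mul_sum]
    simp only [zero_add]
    apply Finset.sum_congr rfl
    intro i hi
    rw [mem_range, Nat.lt_succ_iff] at hi
    obtain ⟨a, ha⟩ := hf i 0
    obtain ⟨c, hc⟩ := hg (n-i) i
    rw [ha, hc, Int.mul_ediv_cancel_left _ (qpow_ne hq i),
      Int.mul_ediv_cancel_left _ (qpow_ne hq (n-i)),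
      show ((q:ℤ))^n = (q:ℤ)^i * (q:ℤ)^(n-i) from by
        rw [← pow_add, Nat.add_sub_cancel' hi]]
    ring
  rw [eps, key, Int.mul_ediv_cancel_left _ (qpow_ne hq n)]
  push_cast
  apply Finset.sum_congr rfl
  intro i hi
  rw [eps_spec hq hg (n-i) i]
  rfl
end

section
variable {R : Type*} [CommRing R]

def bconv (u v : ℕ → R) : ℕ → R :=
  fun n => ∑ i ∈ range (n+1), (n.choose i : R) * u i * v (n-i)

def oneSeq : ℕ → R := fun n => if n = 0 then 1 else 0

def upow (u : ℕ → R) : ℕ → ℕ → R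
  | 0 => oneSeq
  | j+1 => bconv u (upow u j)

lemma bconv_one_right (u : ℕ → R) : bconv u oneSeq = u := by
  funext n
  rw [bconv]
  rw [Finset.sum_eq_single n]
  · simp [oneSeq]
  · intro i hi hne
    rw [mem_range, Nat.lt_succ_iff] at hi
    have : n - i ≠ 0 := by omega
    simp [oneSeq, this]
  · intro h; exact absurd (self_mem_range_succ n) h

lemma bconv_one_left (u : ℕ → R) : bconv oneSeq u = u := by
  funext n
  rw [bconv]
  rw [Finset.sum_eq_single 0]
  · simp [oneSeq]
  · intro i hi hne
    simp [oneSeq, hne]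
  · intro h; exact absurd (mem_range.mpr (by omega)) h

lemma choose_tri (n i j : ℕ) :
    n.choose i * (n - i).choose j = n.choose j * (n - j).choose i := by
  by_cases h : i + j ≤ n
  · have h1 : i ≤ n := by omega
    have h2 : j ≤ n - i := by omega
    have h3 : j ≤ n := by omega
    have h4 : i ≤ n - j := by omega
    have A := Nat.choose_mul_factorial_mul_factorial h1
    have B := Nat.choose_mul_factorial_mul_factorial h2
    have A' := Nat.choose_mul_factorial_mul_factorial h3
    have B' := Nat.choose_mul_factorial_mul_factorial h4
    have e1 : n.choose i * (n - i).choose j * (Nat.factorial i * Nat.factorial j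
        * Nat.factorial (n - i - j)) = Nat.factorial n := by
      calc n.choose i * (n - i).choose j * (Nat.factorial i * Nat.factorial j
            * Nat.factorial (n - i - j))
          = (n.choose i * Nat.factorial i) *
            ((n - i).choose j * Nat.factorial j * Nat.factorial (n - i - j)) := by ring
        _ = (n.choose i * Nat.factorial i) * Nat.factorial (n - i) := by rw [B]
        _ = Nat.factorial n := A
    have e2 : n.choose j * (n - j).choose i * (Nat.factorial i * Nat.factorial j
        * Nat.factorial (n - i - j)) = Nat.factorial n := by
      have hs : n - j - i = n - i - j := by omega
      calc n.choose j * (n - j).choose i * (Nat.factorial i * Nat.factorial j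
            * Nat.factorial (n - i - j))
          = (n.choose j * Nat.factorial j) *
            ((n - j).choose i * Nat.factorial i * Nat.factorial (n - j - i)) := by
              rw [hs]; ring
        _ = (n.choose j * Nat.factorial j) * Nat.factorial (n - j) := by rw [B']
        _ = Nat.factorial n := A'
    have hpos : 0 < Nat.factorial i * Nat.factorial j * Nat.factorial (n - i - j) :=
      Nat.mul_pos (Nat.mul_pos (Nat.factorial_pos i) (Nat.factorial_pos j))
        (Nat.factorial_pos (n - i - j))
    exact Nat.eq_of_mul_eq_mul_right hpos (e1.trans e2.symm)
  · have l1 : n.choose i * (n-i).choose j = 0 := by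
      by_cases h1 : i ≤ n
      · rw [Nat.choose_eq_zero_of_lt (show n - i < j by omega)]; simp
      · rw [Nat.choose_eq_zero_of_lt (show n < i by omega)]; simp
    have l2 : n.choose j * (n-j).choose i = 0 := by
      by_cases h2 : j ≤ n
      · rw [Nat.choose_eq_zero_of_lt (show n - j < i by omega)]; simp
      · rw [Nat.choose_eq_zero_of_lt (show n < j by omega)]; simp
    rw [l1, l2]

lemma bconv_expand (u v w : ℕ → R) (n : ℕ) :
    bconv u (bconv v w) n
      = ∑ i ∈ range (n+1), ∑ j ∈ range (n+1),
          (n.choose i : R) * ((n-i).choose j : R) * u i * v j * w (n-i-j) := by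
  rw [bconv]
  apply Finset.sum_congr rfl
  intro i hi
  rw [mem_range, Nat.lt_succ_iff] at hi
  rw [bconv, Finset.mul_sum]
  rw [← Finset.sum_subset (Finset.range_subset_range.mpr (show n-i+1 ≤ n+1 by omega))]
  · apply Finset.sum_congr rfl
    intro j hj
    rw [mem_range, Nat.lt_succ_iff] at hj
    ring
  · intro j hj hnj
    rw [mem_range, Nat.lt_succ_iff] at hj
    rw [mem_range, Nat.lt_succ_iff] at hnj
    have : n - i < j := by omega
    rw [Nat.choose_eq_zero_of_lt this]
    simp

lemma bconv_left_comm (u v w : ℕ → R) : bconv u (bconv v w) = bconv v (bconv u w) := by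
  funext n
  rw [bconv_expand, bconv_expand, Finset.sum_comm]
  apply Finset.sum_congr rfl; intro j _
  apply Finset.sum_congr rfl; intro i _
  have hc : (n.choose i) * ((n-i).choose j) = (n.choose j) * ((n-j).choose i) := choose_tri n i j
  have hw : n - i - j = n - j - i := by omega
  calc (n.choose i : R) * ((n-i).choose j : R) * u i * v j * w (n-i-j)
      = ((n.choose i * (n-i).choose j : ℕ) : R) * u i * v j * w (n-i-j) := by push_cast; ring
    _ = ((n.choose j * (n-j).choose i : ℕ) : R) * u i * v j * w (n-i-j) := by rw [hc]
    _ = (n.choose j : R) * ((n-j).choose i : R) * v j * u i * w (n-j-i) := by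
        rw [hw]; push_cast; ring

lemma bconv_smul_right (u v : ℕ → R) (c : R) :
    bconv u (fun i => c * v i) = fun n => c * bconv u v n := by
  funext n
  rw [bconv, bconv, Finset.mul_sum]
  apply Finset.sum_congr rfl
  intro i _
  ring

lemma bconv_deriv (u v : ℕ → R) (n : ℕ) :
    bconv u v (n+1) = bconv (fun i => u (i+1)) v n + bconv u (fun i => v (i+1)) n := by
  rw [show bconv u v (n+1)
      = ∑ i ∈ range (n+2), ((n+1).choose i : R) * u i * v (n+1-i) from rfl]
  rw [Finset.sum_range_succ' (fun i => ((n+1).choose i : R) * u i * v (n+1-i)) (n+1)]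
  simp only [Nat.succ_sub_succ_eq_sub, Nat.choose_succ_succ, Nat.choose_zero_right,
    Nat.cast_add, Nat.cast_one]
  rw [show (∑ i ∈ range (n+1), ((n.choose i : R) + (n.choose (i+1) : R)) * u (i+1) * v (n-i))
      = (∑ i ∈ range (n+1), (n.choose i : R) * u (i+1) * v (n-i))
        + (∑ i ∈ range (n+1), (n.choose (i+1) : R) * u (i+1) * v (n-i)) from by
    rw [← Finset.sum_add_distrib]; apply Finset.sum_congr rfl; intro i _; ring]
  have h1 : bconv (fun i => u (i+1)) v n
      = ∑ i ∈ range (n+1), (n.choose i : R) * u (i+1) * v (n-i) := rfl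
  have h2 : bconv u (fun i => v (i+1)) n
      = (∑ i ∈ range (n+1), (n.choose (i+1) : R) * u (i+1) * v (n-i)) + 1 * u 0 * v (n+1) := by
    rw [show bconv u (fun i => v (i+1)) n
        = ∑ i ∈ range (n+1), (n.choose i : R) * u i * v (n-i+1) from rfl]
    rw [Finset.sum_range_succ' (fun i => (n.choose i : R) * u i * v (n-i+1)) n]
    rw [Finset.sum_range_succ (fun i => ((n.choose (i+1) : R)) * u (i+1) * v (n-i)) n]
    simp only [Nat.choose_succ_self, Nat.cast_zero, zero_mul, add_zero,
      Nat.choose_zero_right, Nat.cast_one, Nat.sub_zero]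
    have : ∀ i ∈ range n, (n.choose (i+1) : R) * u (i+1) * v (n-(i+1)+1)
        = (n.choose (i+1) : R) * u (i+1) * v (n-i) := by
      intro i hi
      rw [mem_range] at hi
      rw [show n - (i+1) + 1 = n - i from by omega]
    rw [Finset.sum_congr rfl this]
  rw [h1, h2]
  simp only [Nat.sub_zero]
  ring

lemma upow_deriv (u : ℕ → R) (j n : ℕ) :
    upow u (j+1) (n+1) = ((j+1 : ℕ) : R) * bconv (fun i => u (i+1)) (upow u j) n := by
  induction j generalizing n with
  | zero =>
    rw [show upow u 1 = bconv u oneSeq from rfl, bconv_one_right]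
    rw [show upow u 0 = (oneSeq : ℕ → R) from rfl, bconv_one_right]
    simp
  | succ j ih =>
    rw [show upow u (j+2) = bconv u (upow u (j+1)) from rfl]
    rw [bconv_deriv]
    have hD : (fun i => upow u (j+1) (i+1))
        = fun i => ((j+1:ℕ):R) * bconv (fun i => u (i+1)) (upow u j) i := by
      funext i; exact ih i
    rw [hD, bconv_smul_right]
    have hlc : bconv u (bconv (fun i => u (i+1)) (upow u j))
        = bconv (fun i => u (i+1)) (upow u (j+1)) := by
      rw [bconv_left_comm]
      rfl
    simp only []
    rw [hlc]
    push_cast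
    ring

lemma upow_zero_apply (u : ℕ → R) (j : ℕ) : upow u j 0 = u 0 ^ j := by
  induction j with
  | zero => simp [upow, oneSeq]
  | succ j ih =>
    rw [show upow u (j+1) = bconv u (upow u j) from rfl]
    rw [show bconv u (upow u j) 0 = ∑ i ∈ range 1, ((0:ℕ).choose i : R) * u i * upow u j (0-i)
      from rfl]
    simp [ih, pow_succ']


end
-- ### new material below ###
section
variable {q : ℕ} (hq : q ≠ 0)

lemma delta_iter_one (n : ℕ) :
    delta^[n] (fun _ => (1:ℤ)) = if n = 0 then (fun _ => (1:ℤ)) else fun _ => 0 := by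
  induction n with
  | zero => simp
  | succ n ih =>
    rw [Function.iterate_succ_apply', ih]
    by_cases hn : n = 0 <;> simp only [hn, if_true, if_false] <;>
      · funext y; simp [delta]

include hq in
lemma eps_one [NeZero q] (n : ℕ) : eps q (fun _ => (1:ℤ)) n = oneSeq n := by
  rw [eps, delta_iter_one]
  cases n with
  | zero => simp [oneSeq]
  | succ n => simp [oneSeq]

include hq in
lemma eps_shift [NeZero q] {g : ℕ → ℤ} (hg : memFq q g) (n : ℕ) :
    eps q (fun y => g (y+1)) n = eps q g n := by
  have h : eps q (fun y => g (y+1)) n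
      = ((delta^[n] g 1 / (q:ℤ)^n : ℤ) : ZMod q) := by
    rw [eps, delta_iter_shift]
  rw [h, eps_spec hq hg n 1]

include hq in
lemma eps_pow [NeZero q] {g : ℕ → ℤ} (hg : memFq q g) (j n : ℕ) :
    eps q (fun y => g y ^ j) n = upow (eps q g) j n := by
  induction j generalizing n with
  | zero => simpa [upow] using eps_one hq n
  | succ j ih =>
    have h1 : (fun y => g y ^ (j+1)) = fun y => g y * g y ^ j := by
      funext y; rw [pow_succ']
    rw [h1]
    have h2 := eps_mul hq hg (memFq_pow hq hg j) n
    rw [h2]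
    rw [show upow (eps q g) (j+1) n = bconv (eps q g) (upow (eps q g) j) n from rfl, bconv]
    apply Finset.sum_congr rfl
    intro i hi
    rw [ih]

include hq in
lemma eps_tree [NeZero q] {g : ℕ → ℤ} (hg : memFq q g) (hq2 : 2 ≤ q) (n : ℕ) :
    eps q (fun y => g (y+1) * g y ^ (q-1)) n = upow (eps q g) q n := by
  have hm1 : memFq q (fun y => g (y+1)) := memFq_shift hq hg
  have hm2 : memFq q (fun y => g y ^ (q-1)) := memFq_pow hq hg (q-1)
  have h := eps_mul hq hm1 hm2 n
  have hterm : ∀ i ∈ range (n+1),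
      (n.choose i : ZMod q) * eps q (fun y => g (y+1)) i * eps q (fun y => g y ^ (q-1)) (n-i)
        = (n.choose i : ZMod q) * eps q g i * upow (eps q g) (q-1) (n-i) := by
    intro i _
    rw [eps_shift hq hg, eps_pow hq hg]
  rw [h, Finset.sum_congr rfl hterm]
  set u := eps q g with hu
  have hqq : bconv u (upow u (q-1)) = upow u q := by
    rw [show bconv u (upow u (q-1)) = upow u ((q-1)+1) from rfl,
      show q-1+1 = q from by omega]
  rw [← hqq, bconv]
end

lemma geom_aux {q : ℕ} (hq : 2 ≤ q) (k : ℕ) :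
    (q - 1) * (∑ i ∈ range k, q ^ i) + 1 = q ^ k := by
  induction k with
  | zero => simp
  | succ k ih =>
    rw [Finset.sum_range_succ, Nat.mul_add]
    have : (q-1) * q^k = q^(k+1) - q^k := by
      rw [Nat.sub_mul, one_mul, pow_succ, Nat.mul_comm]
    rw [this]
    have hle : q^k ≤ q^(k+1) := Nat.pow_le_pow_right (by omega) (by omega)
    omega

lemma S_eq {q : ℕ} (hq : 2 ≤ q) (k : ℕ) :
    (q ^ k - 1) / (q - 1) = ∑ i ∈ range k, q ^ i := by
  have h := geom_aux hq k
  have h2 : q ^ k - 1 = (q - 1) * (∑ i ∈ range k, q ^ i) := by omega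
  rw [h2, Nat.mul_div_cancel_left _ (show 0 < q - 1 by omega)]

lemma S_one {q : ℕ} (hq : 2 ≤ q) : (q ^ 1 - 1) / (q - 1) = 1 := by
  rw [S_eq hq]; simp

lemma S_succ {q : ℕ} (hq : 2 ≤ q) (k : ℕ) :
    (q ^ (k+1) - 1) / (q - 1) - 1 = q * ((q ^ k - 1) / (q - 1)) := by
  rw [S_eq hq, S_eq hq, Finset.sum_range_succ', Finset.mul_sum]
  simp only [pow_zero, pow_succ]
  rw [Nat.add_sub_cancel]
  apply Finset.sum_congr rfl
  intro i _
  ring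

lemma S_pos {q : ℕ} (hq : 2 ≤ q) (k : ℕ) (hk : 1 ≤ k) :
    1 ≤ (q ^ k - 1) / (q - 1) := by
  rw [S_eq hq]
  calc 1 = ∑ i ∈ range 1, q ^ i := by simp
    _ ≤ _ := by
      apply Finset.sum_le_sum_of_subset
      exact Finset.range_subset_range.mpr hk

lemma upow_q_succ {q : ℕ} (hq2 : 2 ≤ q) (u : ℕ → ZMod q) (n : ℕ) :
    upow u q (n+1) = 0 := by
  have h := upow_deriv u (q-1) n
  rw [show q-1+1 = q from by omega] at h
  rw [h, ZMod.natCast_self, zero_mul]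

end EpsAux


open EpsAux

/-- For the average weight functions `f_k` of complete `q`-ary trees of depth `k`
(`f_1 = b`, `f_{k+1}(x) = b(x) · ⟨f_k, …, f_k⟩(x)` with `q` copies of `f_k`), one has
`ε_m^{f_k} ≡ ε_m^b · (ε_0^b)^((q^k−1)/(q−1) − 1) (mod q)`. -/
theorem epsilon_complete_q_ary_tree
    (q : ℕ) (hq : 2 ≤ q)
    (b : ℕ → ℤ) (hb : memFq q b)
    (f : ℕ → ℕ → ℤ) (hf1 : f 1 = b)
    (hfk : ∀ k : ℕ, 1 ≤ k → ∀ x : ℕ, f (k + 1) x = b x *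
      ((∑ _i : Fin q, f k (x + 1) * ∏ _j ∈ Finset.univ.erase _i, f k x) / (q : ℤ))) :
    ∀ k : ℕ, 1 ≤ k → ∀ m : ℕ,
      epsq q (f k) m ≡ epsq q b m * (epsq q b 0) ^ ((q ^ k - 1) / (q - 1) - 1)
        [ZMOD (q : ℤ)] := by
  intro k hk m
  haveI : NeZero q := ⟨by omega⟩
  have hq0 : q ≠ 0 := by omega
  have main : ∀ k, 1 ≤ k → memFq q (f k) ∧
      (∀ m, eps q (f k) m
        = eps q b m * (eps q b 0) ^ ((q ^ k - 1) / (q - 1) - 1)) := by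
    intro k hk
    induction k with
    | zero => omega
    | succ k ih =>
      rcases Nat.lt_or_ge k 1 with hk0 | hk1
      · have hk0' : k = 0 := by omega
        subst hk0'
        rw [hf1]
        refine ⟨hb, fun m => ?_⟩
        rw [S_one hq]
        simp
      · obtain ⟨hmem, heps⟩ := ih hk1
        have hfe : f (k+1) = fun x => b x * (f k (x+1) * f k x ^ (q-1)) := by
          funext x
          rw [hfk k hk1 x]
          congr 1
          have hprod : ∀ i : Fin q, (∏ _j ∈ Finset.univ.erase i, f k x) = f k x ^ (q-1) := by
            intro i
            rw [Finset.prod_const, Finset.card_erase_of_mem (Finset.mem_univ i),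
              Finset.card_univ, Fintype.card_fin]
          have hsum : (∑ _i : Fin q, f k (x + 1) * ∏ _j ∈ Finset.univ.erase _i, f k x)
              = (q:ℤ) * (f k (x+1) * f k x ^ (q-1)) := by
            rw [Finset.sum_congr rfl (fun i _ => by rw [hprod i])]
            rw [Finset.sum_const, Finset.card_univ, Fintype.card_fin, nsmul_eq_mul]
          rw [hsum, Int.mul_ediv_cancel_left _ (by exact_mod_cast hq0)]
        have hG : memFq q (fun y => f k (y+1) * f k y ^ (q-1)) :=
          memFq_mul hq0 (memFq_shift hq0 hmem) (memFq_pow hq0 hmem (q-1))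
        constructor
        · rw [hfe]
          exact memFq_mul hq0 hb hG
        · intro m
          have h1 : eps q (f (k+1)) m
              = ∑ i ∈ Finset.range (m+1), (m.choose i : ZMod q) * eps q b i
                  * eps q (fun y => f k (y+1) * f k y ^ (q-1)) (m-i) := by
            rw [hfe]; exact eps_mul hq0 hb hG m
          have h2 : ∀ l, eps q (fun y => f k (y+1) * f k y ^ (q-1)) l
              = upow (eps q (f k)) q l := fun l => eps_tree hq0 hmem hq l
          rw [h1]
          rw [Finset.sum_eq_single m]
          · rw [h2, Nat.sub_self, upow_zero_apply]
            have h0 : eps q (f k) 0 = (eps q b 0) ^ ((q ^ k - 1)/(q-1)) := by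
              rw [heps 0, ← pow_succ']
              congr 1
              have := S_pos hq k hk1
              omega
            rw [h0, Nat.choose_self, ← pow_mul]
            rw [show (q ^ k - 1)/(q-1) * q = (q^(k+1) - 1)/(q-1) - 1 from by
              rw [S_succ hq k]; ring]
            simp
          · intro i hi hne
            rw [Finset.mem_range, Nat.lt_succ_iff] at hi
            rw [h2, show m - i = (m - i - 1) + 1 from by omega, upow_q_succ hq]
            simp
          · intro habs
            exact absurd (Finset.self_mem_range_succ m) habs
  obtain ⟨_, heps⟩ := main k hk
  have hkey := heps m
  have ceps : ∀ (g : ℕ → ℤ) (n : ℕ), ((epsq q g n : ℤ) : ZMod q) = eps q g n := by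
    intro g n
    rw [epsq, ZMod.intCast_mod]
    rfl
  rw [← ZMod.intCast_eq_intCast_iff]
  push_cast
  rw [ceps, ceps, ceps]
  exact hkey
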